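/- arXiv:0709.1110 — 5 statements merged into one kernel-verified Lean document; each statement's English description precedes it below -/
import Mathlib

section
/- The map s : ℝ² × ℝ² → ℝ² defined by s_{(a,ℓ)}(a',ℓ') = (2a − a', 2cosh(2(a−a'))ℓ − ℓ') satisfies: (i) each s_x is involutive, i.e. s_x(s_x(y)) = y; (ii) s_x(x) = x; (iii) s_x ∘ s_y ∘ s_x = s_{s_x(y)} for all x, y ∈ ℝ². -/
/-- Symmetry map of the solvable symmetric surface. -/
noncomputable def symM (x y : ℝ × ℝ) : ℝ × ℝ :=
  (2 * x.1 - y.1, 2 * Real.cosh (2 * (x.1 - y.1)) * x.2 - y.2)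

theorem symM_symmetric_space :
    (∀ x y : ℝ × ℝ, symM x (symM x y) = y) ∧
    (∀ x : ℝ × ℝ, symM x x = x) ∧
    (∀ x y z : ℝ × ℝ, symM x (symM y (symM x z)) = symM (symM x y) z) := by
  refine ⟨?_, ?_, ?_⟩
  · intro x y
    simp only [symM]
    ext <;> simp <;> ring_nf
    rw [show -(x.1 * 2) + y.1 * 2 = -(x.1 * 2 - y.1 * 2) by ring, Real.cosh_neg]
    ring
  · intro x
    ext <;> simp [symM] <;> ring
  · intro x y z
    obtain ⟨a, α⟩ := x; obtain ⟨b, β⟩ := y; obtain ⟨c, γ⟩ := z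
    simp only [symM, Prod.mk.injEq]
    constructor
    · ring
    · rw [show 2 * (a - (2 * b - (2 * a - c))) = 2 * (2 * a - b - c) + 2 * (a - b) by ring,
        show 2 * (b - (2 * a - c)) = -(2 * (2 * a - b - c)) by ring,
        show (2 : ℝ) * (a - c) = 2 * (2 * a - b - c) - 2 * (a - b) by ring]
      rw [Real.cosh_add, Real.cosh_sub, Real.cosh_neg]
      ring
end

section
/- For any three points x, y, z in M = ℝ² (with the symmetry map s of the solvable symmetric surface), the equation s_x(s_y(s_z(t))) = t admits a unique solution t ∈ M. -/
/-- The equation s_x s_y s_z (t) = t has a unique solution. -/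
theorem triple_symmetry_unique_fixed_point (x y z : ℝ × ℝ) :
    ∃! t : ℝ × ℝ, symM x (symM y (symM z t)) = t := by
  refine ⟨(x.1 - y.1 + z.1,
    Real.cosh (2 * (z.1 - y.1)) * x.2 - Real.cosh (2 * (x.1 - z.1)) * y.2
      + Real.cosh (2 * (y.1 - x.1)) * z.2), ?_, ?_⟩
  · simp only [symM, Prod.mk.injEq]
    constructor
    · ring
    · ring_nf
  · rintro ⟨t1, t2⟩ h
    simp only [symM, Prod.mk.injEq] at h
    obtain ⟨h1, h2⟩ := h
    have ht1 : t1 = x.1 - y.1 + z.1 := by linarith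
    subst ht1
    refine Prod.ext rfl ?_
    simp only
    ring_nf at h2 ⊢
    linarith
end

section
/- The canonical admissible function S_can(x₀,x₁,x₂) = (1/2)·[sinh(2(a₀−a₁))ℓ₂ + sinh(2(a₁−a₂))ℓ₀ + sinh(2(a₂−a₀))ℓ₁] on M = ℝ² is invariant under the diagonal action of every symmetry: S_can(s_m(x₀), s_m(x₁), s_m(x₂)) = S_can(x₀,x₁,x₂) for all m, x₀, x₁, x₂ ∈ M. -/
/-- The canonical admissible three-point function on M. -/
noncomputable def Scan (x₀ x₁ x₂ : ℝ × ℝ) : ℝ :=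
  (1 / 2) * (Real.sinh (2 * (x₀.1 - x₁.1)) * x₂.2
    + Real.sinh (2 * (x₁.1 - x₂.1)) * x₀.2
    + Real.sinh (2 * (x₂.1 - x₀.1)) * x₁.2)

theorem Scan_symmetry_invariant (m x₀ x₁ x₂ : ℝ × ℝ) :
    Scan (symM m x₀) (symM m x₁) (symM m x₂) = Scan x₀ x₁ x₂ := by
  have hs : ∀ u v : ℝ, Real.sinh (2 * (u - v))
      = (Real.exp (2*u) * (Real.exp (2*v))⁻¹ - Real.exp (2*v) * (Real.exp (2*u))⁻¹) / 2 := by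
    intro u v
    rw [Real.sinh_eq, show (2:ℝ)*(u-v) = 2*u + -(2*v) by ring, Real.exp_add, Real.exp_neg,
      neg_add, neg_neg, Real.exp_add, Real.exp_neg]
    ring
  have hc : ∀ u v : ℝ, Real.cosh (2 * (u - v))
      = (Real.exp (2*u) * (Real.exp (2*v))⁻¹ + Real.exp (2*v) * (Real.exp (2*u))⁻¹) / 2 := by
    intro u v
    rw [Real.cosh_eq, show (2:ℝ)*(u-v) = 2*u + -(2*v) by ring, Real.exp_add, Real.exp_neg,
      neg_add, neg_neg, Real.exp_add, Real.exp_neg]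
    ring
  simp only [Scan, symM]
  rw [show (2:ℝ)*((2*m.1 - x₀.1) - (2*m.1 - x₁.1)) = 2*(x₁.1 - x₀.1) by ring,
      show (2:ℝ)*((2*m.1 - x₁.1) - (2*m.1 - x₂.1)) = 2*(x₂.1 - x₁.1) by ring,
      show (2:ℝ)*((2*m.1 - x₂.1) - (2*m.1 - x₀.1)) = 2*(x₀.1 - x₂.1) by ring]
  simp only [hs, hc]
  have e0 := Real.exp_ne_zero (2 * m.1)
  have e1 := Real.exp_ne_zero (2 * x₀.1)
  have e2 := Real.exp_ne_zero (2 * x₁.1)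
  have e3 := Real.exp_ne_zero (2 * x₂.1)
  generalize Real.exp (2 * m.1) = A at *
  generalize Real.exp (2 * x₀.1) = B at *
  generalize Real.exp (2 * x₁.1) = C at *
  generalize Real.exp (2 * x₂.1) = D at *
  field_simp
  ring
end

section
/- The canonical function S_can(x₀,x₁,x₂) = (1/2)·Σ_{cyclic} sinh(2(a₀−a₁))ℓ₂ satisfies the antisymmetry property S_can(x, s_x(y), z) = −S_can(x, y, z) for all x, y, z ∈ ℝ². -/
theorem Scan_antisymmetry (x y z : ℝ × ℝ) :
    Scan x (symM x y) z = - Scan x y z := by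
  simp only [Scan, symM, Real.sinh_eq, Real.cosh_eq]
  rw [show 2*(x.1 - (2*x.1 - y.1)) = 2*y.1 - 2*x.1 by ring,
      show 2*((2*x.1 - y.1) - z.1) = 2*x.1 + 2*x.1 - (2*y.1 + 2*z.1) by ring,
      show 2*(z.1 - x.1) = 2*z.1 - 2*x.1 by ring,
      show 2*(x.1 - y.1) = 2*x.1 - 2*y.1 by ring,
      show 2*(y.1 - z.1) = 2*y.1 - 2*z.1 by ring]
  simp only [Real.exp_sub, Real.exp_add, neg_sub, Real.exp_neg]
  field_simp [Real.exp_ne_zero]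
  ring
end

section
/- The linear map φ ↦ (t ↦ cosh(t)·φ(sinh(t))) maps the Schwartz space S(ℝ) continuously into itself. -/
open SchwartzMap

set_option synthInstance.maxHeartbeats 1000000
set_option maxHeartbeats 1000000

noncomputable section
namespace CoshSinhAux

/-- Multiplication by `x` as a CLM on Schwartz space. -/
def Mx : 𝓢(ℝ, ℂ) →L[ℝ] 𝓢(ℝ, ℂ) :=
  SchwartzMap.bilinLeftCLM ((ContinuousLinearMap.lsmul ℝ ℝ : ℝ →L[ℝ] ℂ →L[ℝ] ℂ).flip)
    (ContinuousLinearMap.id ℝ ℝ).hasTemperateGrowth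

lemma Mx_apply (f : 𝓢(ℝ, ℂ)) (x : ℝ) : Mx f x = (x : ℂ) * f x := by
  show (ContinuousLinearMap.lsmul ℝ ℝ).flip (f x) (ContinuousLinearMap.id ℝ ℝ x) = (x : ℂ) * f x
  simp [Complex.real_smul]

/-- `L G = x·G + (1+x²)·G'`. -/
def L : 𝓢(ℝ, ℂ) →L[ℝ] 𝓢(ℝ, ℂ) :=
  Mx + SchwartzMap.derivCLM ℝ ℂ + Mx ∘L Mx ∘L SchwartzMap.derivCLM ℝ ℂ

lemma L_apply (G : 𝓢(ℝ, ℂ)) (x : ℝ) :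
    L G x = (x : ℂ) * G x + deriv (G : ℝ → ℂ) x + (x : ℂ) * ((x : ℂ) * deriv (G : ℝ → ℂ) x) := by
  simp [L, Mx_apply, SchwartzMap.derivCLM_apply]

/-- The operators appearing in the iterated derivatives. -/
def A : ℕ → (𝓢(ℝ, ℂ) →L[ℝ] 𝓢(ℝ, ℂ))
  | 0 => ContinuousLinearMap.id ℝ _
  | (n+1) => if Even n then L ∘L A n else SchwartzMap.derivCLM ℝ ℂ ∘L A n

lemma hasDerivAt_comp (G : 𝓢(ℝ, ℂ)) (t : ℝ) :
    HasDerivAt (fun s => G (Real.sinh s))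
      ((Real.cosh t : ℂ) * deriv (G : ℝ → ℂ) (Real.sinh t)) t := by
  have h1 : HasDerivAt (G : ℝ → ℂ) (deriv (G : ℝ → ℂ) (Real.sinh t)) (Real.sinh t) :=
    G.differentiableAt.hasDerivAt
  have := h1.scomp t (Real.hasDerivAt_sinh t)
  simpa [mul_comm, Complex.real_smul, Function.comp_def] using this

lemma deriv_even (G : 𝓢(ℝ, ℂ)) (t : ℝ) :
    deriv (fun s => (Real.cosh s : ℂ) * G (Real.sinh s)) t = L G (Real.sinh t) := by
  have hc : HasDerivAt (fun s : ℝ => (Real.cosh s : ℂ)) ((Real.sinh t : ℝ) : ℂ) t :=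
    (Real.hasDerivAt_cosh t).ofReal_comp
  have hd := (hc.mul (hasDerivAt_comp G t)).deriv
  rw [show (fun s => (Real.cosh s : ℂ) * G (Real.sinh s)) = (fun s => (Real.cosh s : ℂ)) * (fun s => G (Real.sinh s)) from rfl, hd, L_apply]
  have hsq : (Real.cosh t : ℂ) ^ 2 = (Real.sinh t : ℂ) ^ 2 + 1 := by
    norm_cast
    simpa using Real.cosh_sq t
  linear_combination deriv (G : ℝ → ℂ) (Real.sinh t) * hsq

lemma deriv_odd (G : 𝓢(ℝ, ℂ)) (t : ℝ) :
    deriv (fun s => G (Real.sinh s)) t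
      = (Real.cosh t : ℂ) * (SchwartzMap.derivCLM ℝ ℂ G) (Real.sinh t) := by
  rw [(hasDerivAt_comp G t).deriv, SchwartzMap.derivCLM_apply]

lemma key (φ : 𝓢(ℝ, ℂ)) (n : ℕ) (t : ℝ) :
    iteratedDeriv n (fun s => (Real.cosh s : ℂ) * φ (Real.sinh s)) t =
      if Even n then (Real.cosh t : ℂ) * (A n φ) (Real.sinh t) else (A n φ) (Real.sinh t) := by
  induction n generalizing t with
  | zero => simp [A]
  | succ n ih =>
    rw [iteratedDeriv_succ]
    have hfun : iteratedDeriv n (fun s => (Real.cosh s : ℂ) * φ (Real.sinh s)) =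
        fun t => if Even n then (Real.cosh t : ℂ) * (A n φ) (Real.sinh t)
          else (A n φ) (Real.sinh t) := funext fun t => ih t
    rw [hfun]
    by_cases hn : Even n
    · simp only [hn, if_true]
      have hno : ¬ Even (n + 1) := by simpa [Nat.even_add_one] using hn
      rw [if_neg hno, deriv_even]
      simp [A, hn]
    · simp only [hn, if_false]
      have hye : Even (n + 1) := by simpa [Nat.even_add_one] using hn
      rw [if_pos hye, deriv_odd]
      simp [A, hn]

/-- Seminorm bound for an arbitrary CLM on Schwartz space. -/
lemma clm_bound (B : 𝓢(ℝ, ℂ) →L[ℝ] 𝓢(ℝ, ℂ)) (m : ℕ × ℕ) :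
    ∃ (s : Finset (ℕ × ℕ)) (C : ℝ), 0 ≤ C ∧ ∀ φ : 𝓢(ℝ, ℂ),
      (Finset.Iic m).sup (schwartzSeminormFamily ℝ ℝ ℂ) (B φ)
        ≤ C * s.sup (schwartzSeminormFamily ℝ ℝ ℂ) φ := by
  have hp := schwartz_withSeminorms ℝ ℝ ℂ
  set p := schwartzSeminormFamily ℝ ℝ ℂ with hpdef
  have hcont : Continuous ⇑((Finset.Iic m).sup p) :=
    Seminorm.continuous (r := 1)
      (p.basisSets_mem_nhds (fun i => hp.continuous_seminorm i) _
        (p.basisSets_mem (Finset.Iic m) one_pos))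
  have hq : Continuous (((Finset.Iic m).sup p).comp (B : 𝓢(ℝ, ℂ) →ₗ[ℝ] 𝓢(ℝ, ℂ))) := by
    have : ⇑(((Finset.Iic m).sup p).comp (B : 𝓢(ℝ, ℂ) →ₗ[ℝ] 𝓢(ℝ, ℂ)))
        = ⇑((Finset.Iic m).sup p) ∘ ⇑B := rfl
    rw [this]
    exact hcont.comp B.continuous
  obtain ⟨s, C, hC, hle⟩ := Seminorm.bound_of_continuous hp _ hq
  refine ⟨s, C, C.2, fun φ => ?_⟩
  have := hle φ
  simpa [Seminorm.comp_apply, NNReal.smul_def] using this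

lemma cosh_le (t : ℝ) : Real.cosh t ≤ 1 + |Real.sinh t| := by
  have h := Real.cosh_sq t
  nlinarith [Real.cosh_pos t, abs_nonneg (Real.sinh t), sq_abs (Real.sinh t)]

lemma abs_le_sinh (t : ℝ) : |t| ≤ |Real.sinh t| := by
  rcases le_total 0 t with h | h
  · rw [abs_of_nonneg h, abs_of_nonneg (Real.sinh_nonneg_iff.mpr h)]
    exact Real.self_le_sinh_iff.mpr h
  · rw [abs_of_nonpos h, abs_of_nonpos (Real.sinh_nonpos_iff.mpr h)]
    simpa using Real.sinh_le_self_iff.mpr h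

/-- The real-linear version of the operator. -/
def T₀ : 𝓢(ℝ, ℂ) →L[ℝ] 𝓢(ℝ, ℂ) := by
  refine SchwartzMap.mkCLM (𝕜 := ℝ) (fun φ t => (Real.cosh t : ℂ) * φ (Real.sinh t))
    (fun f g x => by simp [mul_add]) (fun a f x => by simp [Complex.real_smul]; ring)
    (fun f => (Complex.ofRealCLM.contDiff.comp Real.contDiff_cosh).mul
      (f.smooth'.comp Real.contDiff_sinh)) ?_
  rintro ⟨k, n⟩
  obtain ⟨s, C, hC, h⟩ := clm_bound (A n) (k + 1, 0)
  refine ⟨s, 2 ^ (k + 1) * C, by positivity, fun φ x => ?_⟩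
  rw [norm_iteratedFDeriv_eq_norm_iteratedDeriv, key φ n x]
  set G := A n φ with hG
  set u := Real.sinh x with hu
  have hB1 : (1 : ℝ) ≤ 1 + |u| := by simp [abs_nonneg]
  have hxB : ‖x‖ ≤ 1 + |u| := by
    rw [Real.norm_eq_abs]
    exact (abs_le_sinh x).trans (by linarith [abs_nonneg u])
  have hN : ‖if Even n then (Real.cosh x : ℂ) * G u else G u‖ ≤ (1 + |u|) * ‖G u‖ := by
    split_ifs
    · rw [norm_mul, Complex.norm_real, Real.norm_eq_abs,
        abs_of_pos (Real.cosh_pos x)]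
      exact mul_le_mul_of_nonneg_right (cosh_le x) (norm_nonneg _)
    · nlinarith [norm_nonneg (G u), abs_nonneg u]
  calc ‖x‖ ^ k * ‖if Even n then (Real.cosh x : ℂ) * G u else G u‖
      ≤ (1 + |u|) ^ k * ((1 + |u|) * ‖G u‖) := by
        refine mul_le_mul (pow_le_pow_left₀ (norm_nonneg _) hxB k) hN (norm_nonneg _)
          (by positivity)
    _ = (1 + ‖u‖) ^ (k + 1) * ‖iteratedFDeriv ℝ 0 (G : ℝ → ℂ) u‖ := by
        rw [norm_iteratedFDeriv_zero, Real.norm_eq_abs, pow_succ]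
        ring
    _ ≤ 2 ^ (k + 1) * (Finset.Iic (k + 1, 0)).sup (schwartzSeminormFamily ℝ ℝ ℂ) G := by
        exact one_add_le_sup_seminorm_apply (m := (k + 1, 0)) le_rfl le_rfl G u
    _ ≤ 2 ^ (k + 1) * (C * s.sup (schwartzSeminormFamily ℝ ℝ ℂ) φ) := by
        gcongr
        exact h φ
    _ = 2 ^ (k + 1) * C * s.sup (schwartzSeminormFamily ℝ ℝ ℂ) φ := by ring

/-- The complex-linear upgrade. -/
def T : 𝓢(ℝ, ℂ) →L[ℂ] 𝓢(ℝ, ℂ) where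
  toFun := T₀
  map_add' := map_add T₀
  map_smul' c φ := SchwartzMap.ext fun t => by
    show (Real.cosh t : ℂ) * (c • φ) (Real.sinh t) = (c • T₀ φ) t
    rw [SchwartzMap.smul_apply, SchwartzMap.smul_apply]
    show _ = c • ((Real.cosh t : ℂ) * φ (Real.sinh t))
    simp only [smul_eq_mul]
    ring
  cont := T₀.continuous

end CoshSinhAux

end

/-- The map φ ↦ (t ↦ cosh t · φ(sinh t)) is a continuous linear endomorphism of
the Schwartz space. -/
theorem cosh_comp_sinh_schwartz :
    ∃ T : SchwartzMap ℝ ℂ →L[ℂ] SchwartzMap ℝ ℂ,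
      ∀ (φ : SchwartzMap ℝ ℂ) (t : ℝ),
        T φ t = (Real.cosh t : ℂ) * φ (Real.sinh t) :=
  ⟨CoshSinhAux.T, fun φ t => rfl⟩
end
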